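/- Let φ : ℂ × ℂ → GL_n(ℂ) satisfy φ(μ+λ, z) = φ(μ, e^λ z)φ(λ, z) and φ(0,z)=I, let M(z) = φ(2πi,z) with Jordan–Chevalley decomposition M(z) = M_s(z)M_u(z), and let σ(λ,z) = exp(−(λ/2πi) log M_u(e^λ z)). Then the deformed map ψ(λ, z) := σ(λ, z)·φ(λ, z) again satisfies the cocycle identity ψ(μ+λ,z) = ψ(μ, e^λ z)ψ(λ, z), and its monodromy ψ(2πi, z) = M_s(z) is semisimple for every z. -/

import Mathlib

open Matrix

abbrev Mat (n : ℕ) := Matrix (Fin n) (Fin n) ℂ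

/-- `S` is diagonalizable over `ℂ`. -/
def IsDiagonalizable {n : ℕ} (S : Mat n) : Prop :=
  ∃ (P : Mat n) (d : Fin n → ℂ), IsUnit P ∧ S = P * Matrix.diagonal d * P⁻¹

/-- The (finite) logarithm series of a unipotent matrix. -/
noncomputable def unipLog {n : ℕ} (U : Mat n) : Mat n :=
  ∑ k ∈ Finset.Icc 1 n, ((-1 : ℂ) ^ (k + 1) / (k : ℂ)) • (U - 1) ^ k

/-- The untwisting cocycle `σ(λ, z) = exp(−(λ/2πi) log M_u(e^λ z))`. -/
noncomputable def untwist {n : ℕ} (Mu : ℂ → Mat n) (l z : ℂ) : Mat n :=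
  NormedSpace.exp
    ((-(l / (2 * Real.pi * Complex.I))) • unipLog (Mu (Complex.exp l * z)))

/-! ### Auxiliary lemmas -/

open Polynomial Finset

section SumReindex

private lemma sum_Icc_one_eq_sum_range {M : Type*} [AddCommMonoid M] (f : ℕ → M) (n : ℕ) :
    ∑ k ∈ Finset.Icc 1 n, f k = ∑ i ∈ Finset.range n, f (i + 1) := by
  induction n with
  | zero => simp
  | succ m ih =>
    rw [Finset.sum_Icc_succ_top (by omega : 1 ≤ m + 1), ih, Finset.sum_range_succ]

end SumReindex

section Aux

variable {n : ℕ}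

/-- `exp` of a nilpotent element is a finite sum. -/
lemma exp_eq_sum_of_pow_eq_zero {m : ℕ} (L : Mat n) (hL : L ^ m = 0) :
    NormedSpace.exp L = ∑ j ∈ Finset.range m, ((j.factorial : ℂ))⁻¹ • L ^ j := by
  rw [NormedSpace.exp_eq_tsum (𝕂 := ℂ)]
  refine tsum_eq_sum ?_
  intro j hj
  have hmj : m ≤ j := le_of_not_gt (by simpa using hj)
  rw [pow_eq_zero_of_le hmj hL, smul_zero]

/-- `unipLog U` factors as `(U - 1) * T` with `T` commuting with `U - 1`. -/
lemma unipLog_eq_mul (U : Mat n) :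
    ∃ T : Mat n, unipLog U = (U - 1) * T ∧ Commute (U - 1) T := by
  refine ⟨∑ k ∈ Finset.Icc 1 n, ((-1 : ℂ) ^ (k + 1) / (k : ℂ)) • (U - 1) ^ (k - 1), ?_, ?_⟩
  · rw [unipLog, Finset.mul_sum]
    refine Finset.sum_congr rfl fun k hk => ?_
    obtain ⟨hk1, -⟩ := Finset.mem_Icc.mp hk
    rw [mul_smul_comm, ← pow_succ', Nat.sub_add_cancel hk1]
  · exact Commute.sum_right _ _ _ fun k _ =>
      (((Commute.refl (U - 1)).pow_right _).smul_right _)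

lemma unipLog_pow_eq_zero (U : Mat n) (hU : (U - 1) ^ n = 0) :
    (unipLog U) ^ n = 0 := by
  obtain ⟨T, hT, hcomm⟩ := unipLog_eq_mul U
  rw [hT, hcomm.mul_pow, hU, zero_mul]

/-- Conjugation commutes with `unipLog`. -/
lemma unipLog_conj (P U : Mat n) (hP : IsUnit P) :
    unipLog (P * U * P⁻¹) = P * unipLog U * P⁻¹ := by
  obtain ⟨u, rfl⟩ := hP
  rw [← Matrix.coe_units_inv, unipLog, unipLog, Finset.mul_sum, Finset.sum_mul]
  refine Finset.sum_congr rfl fun k _ => ?_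
  have h1 : ((u : Mat n) * U * (↑u⁻¹ : Mat n) - 1) = (u : Mat n) * (U - 1) * (↑u⁻¹ : Mat n) := by
    rw [Matrix.mul_sub, Matrix.sub_mul, mul_one, Units.mul_inv]
  rw [h1, Units.conj_pow, mul_smul_comm, smul_mul_assoc]

/-- Conjugation commutes with `aeval`. -/
lemma aeval_conj (P A : Mat n) (hP : IsUnit P) (p : Polynomial ℂ) :
    Polynomial.aeval (P * A * P⁻¹) p = P * Polynomial.aeval A p * P⁻¹ := by
  obtain ⟨u, rfl⟩ := hP
  rw [← Matrix.coe_units_inv]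
  induction p using Polynomial.induction_on' with
  | add p q hp hq =>
    rw [map_add, map_add, hp, hq, Matrix.mul_add, Matrix.add_mul]
  | monomial k c =>
    rw [Polynomial.aeval_monomial, Polynomial.aeval_monomial, Units.conj_pow,
      ← Algebra.smul_def, ← Algebra.smul_def, mul_smul_comm, smul_mul_assoc]

/-- A diagonalizable matrix gives a semisimple endomorphism. -/
lemma isSemisimple_of_isDiagonalizable {S : Mat n} (h : IsDiagonalizable S) :
    Module.End.IsSemisimple (Matrix.toLinAlgEquiv' S : Module.End ℂ (Fin n → ℂ)) := by
  classical
  obtain ⟨P, d, hP, rfl⟩ := h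
  set p : Polynomial ℂ := ∏ c ∈ Finset.image d Finset.univ, (Polynomial.X - Polynomial.C c)
    with hp_def
  have hsq : Squarefree p :=
    (Polynomial.separable_prod_X_sub_C_iff'.mpr fun x _ y _ hxy => hxy).squarefree
  have hd0 : (Polynomial.aeval d p : Fin n → ℂ) = 0 := by
    funext i
    have h1 := Polynomial.aeval_algHom_apply (Pi.evalAlgHom ℂ (fun _ => ℂ) i) d p
    have h2 : (Pi.evalAlgHom ℂ (fun _ => ℂ) i) ((Polynomial.aeval d) p) = (Polynomial.aeval d p) i := rfl
    rw [h2] at h1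
    rw [← h1]
    show Polynomial.aeval (d i) p = 0
    rw [show (Polynomial.aeval (d i)) p = Polynomial.eval (d i) p from
      congrFun (Polynomial.coe_aeval_eq_eval (d i)) p, hp_def, Polynomial.eval_prod]
    refine Finset.prod_eq_zero (Finset.mem_image.mpr ⟨i, Finset.mem_univ i, rfl⟩) ?_
    simp
  have hdiag : Polynomial.aeval (Matrix.diagonal d) p = 0 := by
    have h1 : Matrix.diagonal d = Matrix.diagonalAlgHom ℂ d := rfl
    rw [h1, Polynomial.aeval_algHom_apply, hd0, map_zero]
  have hconju : Polynomial.aeval (P * Matrix.diagonal d * P⁻¹) p = 0 := by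
    rw [aeval_conj _ _ hP, hdiag, mul_zero, zero_mul]
  have hfin : Polynomial.aeval (Matrix.toLinAlgEquiv' (P * Matrix.diagonal d * P⁻¹)) p = 0 := by
    rw [Polynomial.aeval_algHom_apply (Matrix.toLinAlgEquiv' (R := ℂ) (n := Fin n)), hconju,
      map_zero]
  exact Module.End.isSemisimple_of_squarefree_aeval_eq_zero hsq hfin

/-- Uniqueness of the multiplicative Jordan–Chevalley decomposition. -/
lemma jc_unique {S₁ U₁ S₂ U₂ : Mat n}
    (hs₁ : IsDiagonalizable S₁) (hs₂ : IsDiagonalizable S₂)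
    (hu₁ : (U₁ - 1) ^ n = 0) (hu₂ : (U₂ - 1) ^ n = 0)
    (hc₁ : Commute S₁ U₁) (hc₂ : Commute S₂ U₂)
    (hunit : IsUnit (S₁ * U₁))
    (heq : S₁ * U₁ = S₂ * U₂) : S₁ = S₂ ∧ U₁ = U₂ := by
  classical
  let e : Mat n ≃ₐ[ℂ] Module.End ℂ (Fin n → ℂ) := Matrix.toLinAlgEquiv'
  set f : Module.End ℂ (Fin n → ℂ) := e (S₁ * U₁) with hf_def
  -- each semisimple factor acts as `μ •` on each generalized eigenspace of `f`
  have hact : ∀ (S U : Mat n), IsDiagonalizable S → (U - 1) ^ n = 0 → Commute S U →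
      S₁ * U₁ = S * U →
      ∀ (μ : ℂ) (m : Fin n → ℂ), m ∈ f.maxGenEigenspace μ → e S m = μ • m := by
    intro S U hs hu' hcm hSU μ m hm
    refine Module.End.apply_eq_of_mem_of_comm_of_isFinitelySemisimple_of_isNil hm ?_ ?_ ?_
    · -- Commute f (e S)
      have h1 : (S * U) * S = S * (S * U) := (Commute.mul_left (Commute.refl S) hcm.symm).eq
      show f * e S = e S * f
      rw [hf_def, hSU, ← _root_.map_mul, ← _root_.map_mul, h1]
    · exact (isSemisimple_of_isDiagonalizable hs).isFinitelySemisimple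
    · -- IsNilpotent (f - e S)
      have h2 : f - e S = e (S * (U - 1)) := by
        rw [hf_def, hSU, ← map_sub]
        congr 1
        rw [Matrix.mul_sub, mul_one]
      rw [h2]
      refine ⟨n, ?_⟩
      rw [← map_pow, (hcm.sub_right (Commute.one_right S)).mul_pow, hu', mul_zero, map_zero]
  have hS : S₁ = S₂ := by
    have hext : ∀ m : Fin n → ℂ, e S₁ m = e S₂ m := by
      intro m
      have hm : m ∈ ⨆ μ, f.maxGenEigenspace μ := by
        rw [Module.End.iSup_maxGenEigenspace_eq_top]; trivial
      refine Submodule.iSup_induction (motive := fun m => e S₁ m = e S₂ m) _ hm ?_ ?_ ?_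
      · intro μ x hx
        show e S₁ x = e S₂ x
        rw [hact S₁ U₁ hs₁ hu₁ hc₁ rfl μ x hx, hact S₂ U₂ hs₂ hu₂ hc₂ heq μ x hx]
      · show e S₁ 0 = e S₂ 0
        rw [map_zero, map_zero]
      · intro x y hx hy
        show e S₁ (x + y) = e S₂ (x + y)
        rw [map_add, map_add, hx, hy]
    exact e.injective (LinearMap.ext hext)
  refine ⟨hS, ?_⟩
  have hU₁unit : IsUnit U₁ := by
    have h1 : IsNilpotent (U₁ - 1) := ⟨n, hu₁⟩
    have h2 := h1.isUnit_one_add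
    rwa [add_sub_cancel] at h2
  have hS₁unit : IsUnit S₁ := by
    rw [Matrix.isUnit_iff_isUnit_det] at hunit ⊢
    rw [Matrix.det_mul] at hunit
    exact isUnit_of_mul_isUnit_left hunit
  rw [← hS] at heq
  exact hS₁unit.mul_left_cancel heq

/-- Conjugation is multiplicative. -/
lemma matConj_mul {P : Mat n} (A B : Mat n) (hP : IsUnit P) :
    (P * A * P⁻¹) * (P * B * P⁻¹) = P * (A * B) * P⁻¹ := by
  obtain ⟨u, rfl⟩ := hP
  rw [← Matrix.coe_units_inv]
  have h : (↑u⁻¹ : Mat n) * (↑u * (B * ↑u⁻¹)) = B * ↑u⁻¹ := by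
    rw [← Matrix.mul_assoc, Units.inv_mul, Matrix.one_mul]
  simp only [Matrix.mul_assoc]
  rw [h]

lemma conj_commute {P A B : Mat n} (hP : IsUnit P) (h : Commute A B) :
    Commute (P * A * P⁻¹) (P * B * P⁻¹) := by
  show _ * _ = _ * _
  rw [matConj_mul A B hP, matConj_mul B A hP, h.eq]

lemma conj_diag {P S : Mat n} (hP : IsUnit P) (h : IsDiagonalizable S) :
    IsDiagonalizable (P * S * P⁻¹) := by
  obtain ⟨Q, d, hQ, rfl⟩ := h
  refine ⟨P * Q, d, hP.mul hQ, ?_⟩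
  rw [Matrix.mul_inv_rev]
  simp only [Matrix.mul_assoc]

lemma conj_unip {P U : Mat n} (hP : IsUnit P) (hU : (U - 1) ^ n = 0) :
    ((P * U * P⁻¹) - 1) ^ n = 0 := by
  obtain ⟨u, rfl⟩ := hP
  rw [← Matrix.coe_units_inv]
  have h1 : ((u : Mat n) * U * (↑u⁻¹ : Mat n) - 1) = (u : Mat n) * (U - 1) * (↑u⁻¹ : Mat n) := by
    rw [Matrix.mul_sub, Matrix.sub_mul, mul_one, Units.mul_inv]
  rw [h1, Units.conj_pow, hU, mul_zero, zero_mul]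

end Aux

/-! ### The `exp ∘ log = id` identity for unipotent matrices -/

section ExpLog

/-- The truncated logarithm polynomial over `ℝ`. -/
noncomputable def logPolyR (n : ℕ) : Polynomial ℝ :=
  ∑ k ∈ Finset.Icc 1 n, Polynomial.C ((-1 : ℝ) ^ (k + 1) / (k : ℝ)) * Polynomial.X ^ k

/-- Truncated `exp ∘ log` polynomial over `ℝ`. -/
noncomputable def expLogPolyR (n : ℕ) : Polynomial ℝ :=
  ∑ j ∈ Finset.range n, Polynomial.C ((j.factorial : ℝ)⁻¹) * (logPolyR n) ^ j

/-- Coefficient extraction: a real polynomial that is `O(t^m)` on `(0, 1/2)` has vanishing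
coefficients below `m`. -/
private lemma coeff_eq_zero_of_bound :
    ∀ (m : ℕ) (p : Polynomial ℝ) (C : ℝ),
      (∀ t : ℝ, t ∈ Set.Ioo (0 : ℝ) (1 / 2) → |p.eval t| ≤ C * t ^ m) →
      ∀ i < m, p.coeff i = 0 := by
  intro m
  induction m with
  | zero => intro p C _ i hi; omega
  | succ m ih =>
    intro p C h
    have hmem : Set.Ioo (0 : ℝ) (1 / 2) ∈ nhdsWithin (0 : ℝ) (Set.Ioi 0) :=
      Ioo_mem_nhdsGT_of_mem ⟨le_refl 0, by norm_num⟩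
    have h0 : p.coeff 0 = 0 := by
      have h1 : Filter.Tendsto (fun t : ℝ => p.eval t) (nhdsWithin 0 (Set.Ioi 0))
          (nhds (p.eval 0)) := (p.continuous.tendsto 0).mono_left nhdsWithin_le_nhds
      have h2 : Filter.Tendsto (fun t : ℝ => p.eval t) (nhdsWithin 0 (Set.Ioi 0)) (nhds 0) := by
        refine squeeze_zero_norm' (a := fun t : ℝ => C * t ^ (m + 1)) ?_ ?_
        · exact Filter.eventually_of_mem hmem fun t ht => by
            simpa [Real.norm_eq_abs] using h t ht
        · have h3 : Filter.Tendsto (fun t : ℝ => C * t ^ (m + 1)) (nhdsWithin 0 (Set.Ioi 0))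
              (nhds (C * (0 : ℝ) ^ (m + 1))) :=
            ((continuous_const.mul (continuous_pow (m + 1))).tendsto 0).mono_left
              nhdsWithin_le_nhds
          simpa using h3
      have := tendsto_nhds_unique h1 h2
      rwa [Polynomial.coeff_zero_eq_eval_zero]
    have hpq : p = Polynomial.X * p.divX := by
      conv_lhs => rw [← Polynomial.X_mul_divX_add p]
      rw [h0, map_zero, add_zero]
    have hq : ∀ t : ℝ, t ∈ Set.Ioo (0 : ℝ) (1 / 2) → |(p.divX).eval t| ≤ C * t ^ m := by
      intro t ht
      have ht0 : (0 : ℝ) < t := ht.1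
      have hb := h t ht
      rw [hpq, Polynomial.eval_mul, Polynomial.eval_X, abs_mul, abs_of_pos ht0] at hb
      have hb2 : t * |(p.divX).eval t| ≤ t * (C * t ^ m) := hb.trans_eq (by ring)
      exact le_of_mul_le_mul_left hb2 ht0
    intro i hi
    match i with
    | 0 => exact h0
    | j + 1 =>
      rw [← Polynomial.coeff_divX]
      exact ih p.divX C hq j (by omega)

private lemma expLogPolyR_bound (n : ℕ) (hn : 0 < n) :
    ∃ C : ℝ, ∀ t : ℝ, t ∈ Set.Ioo (0 : ℝ) (1 / 2) →
      |(expLogPolyR n - (1 + Polynomial.X)).eval t| ≤ C * t ^ n := by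
  refine ⟨2 ^ n * ((n.succ : ℝ) / (n.factorial * n)) + 4, ?_⟩
  rintro t ⟨ht0, ht2⟩
  have h1t : (0 : ℝ) < 1 + t := by linarith
  have htle1 : t ≤ 1 := by linarith
  have htn_le : t ^ n ≤ t := by
    calc t ^ n ≤ t ^ 1 := pow_le_pow_of_le_one (le_of_lt ht0) htle1 hn
      _ = t := pow_one t
  set y : ℝ := (logPolyR n).eval t with hy_def
  set l : ℝ := Real.log (1 + t) with hl_def
  -- |y - l| ≤ t ^ n
  have hyl : |y - l| ≤ t ^ n := by
    have habs : |(-t : ℝ)| < 1 := by rw [abs_neg, abs_of_pos ht0]; linarith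
    have hlog := Real.abs_log_sub_add_sum_range_le habs n
    have hsum : (∑ i ∈ Finset.range n, (-t : ℝ) ^ (i + 1) / ((i : ℝ) + 1)) = -y := by
      rw [hy_def, logPolyR, Polynomial.eval_finset_sum,
        sum_Icc_one_eq_sum_range
          (fun k => Polynomial.eval t (Polynomial.C ((-1 : ℝ) ^ (k + 1) / (k : ℝ)) *
            Polynomial.X ^ k)) n, ← Finset.sum_neg_distrib]
      refine Finset.sum_congr rfl fun i _ => ?_
      rw [Polynomial.eval_mul, Polynomial.eval_C, Polynomial.eval_pow, Polynomial.eval_X,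
        neg_pow t (i + 1)]
      push_cast
      ring
    rw [hsum, sub_neg_eq_add, abs_neg, abs_of_pos ht0] at hlog
    have h1 : |y - l| = |-y + Real.log (1 + t)| := by
      rw [hl_def, ← abs_neg]
      congr 1
      ring
    rw [h1]
    refine le_trans hlog ?_
    have hden : (1 : ℝ) / 2 ≤ 1 - t := by linarith
    have hnum : (0 : ℝ) < t ^ (n + 1) := pow_pos ht0 _
    calc t ^ (n + 1) / (1 - t) ≤ t ^ (n + 1) / (1 / 2) :=
          div_le_div_of_nonneg_left (le_of_lt hnum) (by norm_num) hden
      _ = 2 * t ^ (n + 1) := by ring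
      _ = (2 * t) * t ^ n := by ring
      _ ≤ 1 * t ^ n := by
          have : 2 * t ≤ 1 := by linarith
          exact mul_le_mul_of_nonneg_right this (le_of_lt (pow_pos ht0 n))
      _ = t ^ n := one_mul _
  have hl_nonneg : 0 ≤ l := Real.log_nonneg (by linarith)
  have hl_le : l ≤ t := by
    have := Real.log_le_sub_one_of_pos h1t
    rwa [add_sub_cancel_left] at this
  have hy_le : |y| ≤ 2 * t := by
    calc |y| = |l + (y - l)| := by ring_nf
      _ ≤ |l| + |y - l| := abs_add_le _ _
      _ ≤ t + t ^ n := by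
          rw [abs_of_nonneg hl_nonneg]
          exact add_le_add hl_le hyl
      _ ≤ t + t := add_le_add (le_refl t) htn_le
      _ = 2 * t := by ring
  have hy_le1 : |y| ≤ 1 := by
    refine le_trans hy_le ?_; linarith
  -- the evaluation of expLogPolyR
  have hE : (expLogPolyR n).eval t = ∑ j ∈ Finset.range n, y ^ j / (j.factorial : ℝ) := by
    rw [expLogPolyR, Polynomial.eval_finset_sum]
    refine Finset.sum_congr rfl fun j _ => ?_
    rw [Polynomial.eval_mul, Polynomial.eval_C, Polynomial.eval_pow, ← hy_def]
    rw [div_eq_mul_inv, mul_comm]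
  have hexp1 : |(expLogPolyR n).eval t - Real.exp y| ≤
      2 ^ n * ((n.succ : ℝ) / (n.factorial * n)) * t ^ n := by
    rw [hE]
    have := Real.exp_bound hy_le1 hn
    rw [abs_sub_comm] at this
    refine le_trans this ?_
    have h2 : |y| ^ n ≤ (2 * t) ^ n := pow_le_pow_left₀ (abs_nonneg y) hy_le n
    have h3 : (0 : ℝ) ≤ (n.succ : ℝ) / (n.factorial * n) := by positivity
    calc |y| ^ n * ((n.succ : ℝ) / (n.factorial * n))
        ≤ (2 * t) ^ n * ((n.succ : ℝ) / (n.factorial * n)) :=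
          mul_le_mul_of_nonneg_right h2 h3
      _ = 2 ^ n * ((n.succ : ℝ) / (n.factorial * n)) * t ^ n := by rw [mul_pow]; ring
  have hexp2 : |Real.exp y - Real.exp l| ≤ 4 * t ^ n := by
    have h1 : Real.exp y - Real.exp l = Real.exp l * (Real.exp (y - l) - 1) := by
      rw [mul_sub, mul_one, ← Real.exp_add]
      ring_nf
    have h2 : |y - l| ≤ 1 := le_trans hyl (by linarith)
    have h3 := Real.abs_exp_sub_one_le h2
    rw [h1, abs_mul, Real.abs_exp]
    have h4 : Real.exp l = 1 + t := by rw [hl_def, Real.exp_log h1t]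
    rw [h4]
    calc (1 + t) * |Real.exp (y - l) - 1| ≤ 2 * (2 * |y - l|) := by
          refine mul_le_mul (by linarith) h3 (abs_nonneg _) (by norm_num)
      _ = 4 * |y - l| := by ring
      _ ≤ 4 * t ^ n := by linarith [hyl]
  have hexpl : Real.exp l = 1 + t := by rw [hl_def, Real.exp_log h1t]
  have hfinal : (expLogPolyR n - (1 + Polynomial.X)).eval t =
      ((expLogPolyR n).eval t - Real.exp y) + (Real.exp y - Real.exp l) := by
    rw [Polynomial.eval_sub, Polynomial.eval_add, Polynomial.eval_one, Polynomial.eval_X, hexpl]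
    ring
  rw [hfinal]
  calc |((expLogPolyR n).eval t - Real.exp y) + (Real.exp y - Real.exp l)|
      ≤ |(expLogPolyR n).eval t - Real.exp y| + |Real.exp y - Real.exp l| := abs_add_le _ _
    _ ≤ 2 ^ n * ((n.succ : ℝ) / (n.factorial * n)) * t ^ n + 4 * t ^ n :=
        add_le_add hexp1 hexp2
    _ = (2 ^ n * ((n.succ : ℝ) / (n.factorial * n)) + 4) * t ^ n := by ring

private lemma expLogPolyR_coeff (n : ℕ) (hn : 0 < n) {i : ℕ} (hi : i < n) :
    (expLogPolyR n).coeff i = if i = 0 then 1 else if i = 1 then 1 else 0 := by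
  obtain ⟨C, hC⟩ := expLogPolyR_bound n hn
  have h := coeff_eq_zero_of_bound n _ C hC i hi
  rw [Polynomial.coeff_sub, sub_eq_zero] at h
  rw [h]
  match i with
  | 0 => simp [Polynomial.coeff_one]
  | 1 => simp [Polynomial.coeff_one]
  | (j + 2) => simp [Polynomial.coeff_one, Polynomial.coeff_X]

/-- The complex version of the truncated log polynomial. -/
noncomputable def logPolyC (n : ℕ) : Polynomial ℂ :=
  ∑ k ∈ Finset.Icc 1 n, Polynomial.C ((-1 : ℂ) ^ (k + 1) / (k : ℂ)) * Polynomial.X ^ k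

/-- The complex version of the truncated `exp ∘ log` polynomial. -/
noncomputable def expLogPolyC (n : ℕ) : Polynomial ℂ :=
  ∑ j ∈ Finset.range n, Polynomial.C ((j.factorial : ℂ)⁻¹) * (logPolyC n) ^ j

private lemma logPolyC_eq_map (n : ℕ) :
    logPolyC n = (logPolyR n).map (algebraMap ℝ ℂ) := by
  rw [logPolyR, logPolyC, Polynomial.map_sum]
  refine Finset.sum_congr rfl fun k _ => ?_
  rw [Polynomial.map_mul, Polynomial.map_pow, Polynomial.map_C, Polynomial.map_X]
  congr 1
  congr 1
  push_cast
  rfl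

private lemma expLogPolyC_eq_map (n : ℕ) :
    expLogPolyC n = (expLogPolyR n).map (algebraMap ℝ ℂ) := by
  rw [expLogPolyR, expLogPolyC, Polynomial.map_sum]
  refine Finset.sum_congr rfl fun j _ => ?_
  rw [Polynomial.map_mul, Polynomial.map_pow, Polynomial.map_C, logPolyC_eq_map]
  congr 1
  congr 1
  push_cast
  rfl

private lemma expLogPolyC_coeff (n : ℕ) (hn : 0 < n) {i : ℕ} (hi : i < n) :
    (expLogPolyC n).coeff i = if i = 0 then 1 else if i = 1 then 1 else 0 := by
  rw [expLogPolyC_eq_map, Polynomial.coeff_map, expLogPolyR_coeff n hn hi]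
  split_ifs <;> simp

variable {n : ℕ}

private lemma unipLog_eq_aeval (U : Mat n) :
    unipLog U = Polynomial.aeval (U - 1) (logPolyC n) := by
  rw [unipLog, logPolyC, map_sum]
  refine Finset.sum_congr rfl fun k _ => ?_
  rw [_root_.map_mul, Polynomial.aeval_C, _root_.map_pow, Polynomial.aeval_X, ← Algebra.smul_def]

private lemma aeval_trunc (N : Mat n) (hN : N ^ n = 0) (p : Polynomial ℂ) :
    Polynomial.aeval N p = ∑ i ∈ Finset.range n, p.coeff i • N ^ i := by
  classical
  have hdeg : p.natDegree < max (p.natDegree + 1) n := lt_of_lt_of_le (Nat.lt_succ_self _)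
    (le_max_left _ _)
  rw [Polynomial.aeval_eq_sum_range' hdeg]
  refine (Finset.sum_subset (Finset.range_subset_range.mpr (le_max_right _ _)) ?_).symm
  intro i _ hi
  have hni : n ≤ i := le_of_not_gt (by simpa using hi)
  rw [pow_eq_zero_of_le hni hN, smul_zero]

/-- The key identity: `exp (unipLog U) = U` for unipotent `U`. -/
lemma exp_unipLog (U : Mat n) (hU : (U - 1) ^ n = 0) :
    NormedSpace.exp (unipLog U) = U := by
  rcases Nat.eq_zero_or_pos n with rfl | hn
  · exact Subsingleton.elim _ _
  have hLn : (unipLog U) ^ n = 0 := unipLog_pow_eq_zero U hU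
  rw [exp_eq_sum_of_pow_eq_zero _ hLn]
  have haeval : ∑ j ∈ Finset.range n, ((j.factorial : ℂ))⁻¹ • (unipLog U) ^ j =
      Polynomial.aeval (U - 1) (expLogPolyC n) := by
    rw [expLogPolyC, map_sum]
    refine Finset.sum_congr rfl fun j _ => ?_
    rw [_root_.map_mul, Polynomial.aeval_C, _root_.map_pow, ← unipLog_eq_aeval,
      ← Algebra.smul_def]
  rw [haeval, aeval_trunc _ hU]
  -- now a finite sum with explicit coefficients
  have hcoeff : ∀ i < n, (expLogPolyC n).coeff i =
      if i = 0 then 1 else if i = 1 then 1 else 0 := fun i hi => expLogPolyC_coeff n hn hi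
  rcases eq_or_lt_of_le (Nat.succ_le_of_lt hn) with h1 | h2
  · -- n = 1
    have hn1 : n = 1 := h1.symm
    subst hn1
    rw [Finset.sum_range_one, hcoeff 0 (by norm_num)]
    have hU1 : U = 1 := by
      have := hU
      rw [pow_one, sub_eq_zero] at this
      exact this
    simp [hU1]
  · -- 2 ≤ n
    have h2n : 2 ≤ n := h2
    rw [← Finset.sum_subset (Finset.range_subset_range.mpr h2n) ?_]
    · rw [Finset.sum_range_succ, Finset.sum_range_one, hcoeff 0 (by omega), hcoeff 1 (by omega)]
      simp
    · intro i hi hi2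
      have hilt : i < n := Finset.mem_range.mp hi
      have hige : 2 ≤ i := by
        simp only [Finset.mem_range] at hi2; omega
      rw [hcoeff i hilt]
      have e0 : ¬(i = 0) := by omega
      have e1 : ¬(i = 1) := by omega
      rw [if_neg e0, if_neg e1, zero_smul]

end ExpLog

/-- Twisting a representation of `ℂ ⋉ 𝔸` by the untwisting cocycle `σ` yields a new
representation `ψ = σ · φ` whose monodromy `ψ(2πi, z) = M_s(z)` is semisimple. -/
theorem jordan_chevalley_of_representation {n : ℕ} (φ : ℂ → ℂ → Mat n)
    (Ms Mu : ℂ → Mat n)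
    (hcoc : ∀ μ l z : ℂ, φ (μ + l) z = φ μ (Complex.exp l * z) * φ l z)
    (hid : ∀ z : ℂ, φ 0 z = 1)
    (hs : ∀ z : ℂ, IsDiagonalizable (Ms z))
    (hu : ∀ z : ℂ, (Mu z - 1) ^ n = 0)
    (hc : ∀ z : ℂ, Commute (Ms z) (Mu z))
    (hM : ∀ z : ℂ, φ (2 * Real.pi * Complex.I) z = Ms z * Mu z) :
    (∀ μ l z : ℂ,
      untwist Mu (μ + l) z * φ (μ + l) z =
        (untwist Mu μ (Complex.exp l * z) * φ μ (Complex.exp l * z)) *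
          (untwist Mu l z * φ l z)) ∧
    (∀ z : ℂ,
      untwist Mu (2 * Real.pi * Complex.I) z * φ (2 * Real.pi * Complex.I) z = Ms z ∧
      IsDiagonalizable
        (untwist Mu (2 * Real.pi * Complex.I) z * φ (2 * Real.pi * Complex.I) z)) := by
  have hexpc : Complex.exp (2 * Real.pi * Complex.I) = 1 := Complex.exp_two_pi_mul_I
  set c : ℂ := 2 * Real.pi * Complex.I with hc_def
  have hc0 : c ≠ 0 := by
    rw [hc_def]
    exact mul_ne_zero (mul_ne_zero two_ne_zero
      (Complex.ofReal_ne_zero.mpr Real.pi_ne_zero)) Complex.I_ne_zero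
  -- invertibility of the cocycle φ
  have hmul_right : ∀ l z : ℂ, φ l z * φ (-l) (Complex.exp l * z) = 1 := by
    intro l z
    have h := hcoc l (-l) (Complex.exp l * z)
    have harg : Complex.exp (-l) * (Complex.exp l * z) = z := by
      rw [← mul_assoc, ← Complex.exp_add, neg_add_cancel, Complex.exp_zero, one_mul]
    rw [add_neg_cancel, hid, harg] at h
    exact h.symm
  have hUnit : ∀ l z : ℂ, IsUnit (φ l z) := by
    intro l z
    rw [Matrix.isUnit_iff_isUnit_det]
    have h := congrArg Matrix.det (hmul_right l z)
    rw [Matrix.det_mul, Matrix.det_one] at h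
    exact IsUnit.of_mul_eq_one _ h
  have hdet : ∀ l z : ℂ, IsUnit (φ l z).det := fun l z =>
    (Matrix.isUnit_iff_isUnit_det _).mp (hUnit l z)
  -- conjugation of the monodromy
  have hconjM : ∀ l z : ℂ, φ l z * (Ms z * Mu z) =
      (Ms (Complex.exp l * z) * Mu (Complex.exp l * z)) * φ l z := by
    intro l z
    have h1 := hcoc c l z
    have h2 := hcoc l c z
    rw [hM] at h1
    rw [hexpc, one_mul, hM] at h2
    rw [add_comm l c] at h2
    rw [h1] at h2
    exact h2.symm
  -- equivariance of the semisimple and unipotent parts (Jordan–Chevalley uniqueness)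
  have hequiv : ∀ l z : ℂ, Ms (Complex.exp l * z) = φ l z * Ms z * (φ l z)⁻¹ ∧
      Mu (Complex.exp l * z) = φ l z * Mu z * (φ l z)⁻¹ := by
    intro l z
    have hPu := hUnit l z
    have h4 : Ms (Complex.exp l * z) * Mu (Complex.exp l * z) =
        (φ l z * Ms z * (φ l z)⁻¹) * (φ l z * Mu z * (φ l z)⁻¹) := by
      rw [matConj_mul _ _ hPu, hconjM l z,
        Matrix.mul_nonsing_inv_cancel_right _ _ (hdet l z)]
    have h6 : IsUnit (Ms (Complex.exp l * z) * Mu (Complex.exp l * z)) := by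
      rw [← hM]
      exact hUnit c _
    exact jc_unique (hs _) (conj_diag hPu (hs z)) (hu _) (conj_unip hPu (hu z)) (hc _)
      (conj_commute hPu (hc z)) h6 h4
  constructor
  · -- the cocycle identity for ψ = σ · φ
    intro μ l z
    have harg : Complex.exp (μ + l) * z = Complex.exp μ * (Complex.exp l * z) := by
      rw [Complex.exp_add, mul_assoc]
    set P : Mat n := φ μ (Complex.exp l * z) with hP_def
    have hPu : IsUnit P := hUnit μ (Complex.exp l * z)
    have hPdet : IsUnit P.det := (Matrix.isUnit_iff_isUnit_det _).mp hPu
    have hcomb : untwist Mu (μ + l) z =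
        untwist Mu μ (Complex.exp l * z) * (P * untwist Mu l z * P⁻¹) := by
      have hLconj : unipLog (Mu (Complex.exp μ * (Complex.exp l * z))) =
          P * unipLog (Mu (Complex.exp l * z)) * P⁻¹ := by
        rw [(hequiv μ (Complex.exp l * z)).2, unipLog_conj _ _ hPu]
      simp only [untwist]
      rw [harg]
      set K : Mat n := unipLog (Mu (Complex.exp μ * (Complex.exp l * z))) with hK_def
      have hcom : Commute ((-(μ / c)) • K) ((-(l / c)) • K) :=
        ((Commute.refl K).smul_left _).smul_right _
      rw [← Matrix.exp_conj _ _ hPu, mul_smul_comm, smul_mul_assoc, ← hLconj,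
        ← Matrix.exp_add_of_commute _ _ hcom, ← add_smul, add_div, neg_add]
    rw [hcoc μ l z, hcomb]
    simp only [Matrix.mul_assoc]
    rw [← Matrix.mul_assoc P⁻¹ P (φ l z), Matrix.nonsing_inv_mul _ hPdet, Matrix.one_mul]
  · -- the monodromy of ψ is the semisimple part
    intro z
    have key : untwist Mu c z * φ c z = Ms z := by
      have hcz : Complex.exp c * z = z := by rw [hexpc, one_mul]
      have hdiv : -(c / c) = (-1 : ℂ) := by rw [div_self hc0]
      simp only [untwist]
      rw [hcz, hdiv, hM]
      set L : Mat n := unipLog (Mu z) with hL_def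
      have hnegL : ((-1 : ℂ) • L) = -L := by rw [neg_smul, one_smul]
      rw [hnegL]
      have hLpow : L ^ n = 0 := unipLog_pow_eq_zero (Mu z) (hu z)
      have hnegpow : (-L) ^ n = 0 := by
        rw [neg_pow, hLpow, mul_zero]
      have hcommL : Commute (Ms z) L := by
        rw [hL_def, unipLog]
        refine Commute.sum_right _ _ _ fun k _ => ?_
        exact (((hc z).sub_right (Commute.one_right _)).pow_right _).smul_right _
      have hcommE : Commute (Ms z) (NormedSpace.exp (-L)) := by
        rw [exp_eq_sum_of_pow_eq_zero _ hnegpow]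
        refine Commute.sum_right _ _ _ fun j _ => ?_
        exact ((hcommL.neg_right).pow_right _).smul_right _
      have hinvMu : NormedSpace.exp (-L) * Mu z = 1 := by
        conv_lhs => rw [show Mu z = NormedSpace.exp L from (exp_unipLog (Mu z) (hu z)).symm]
        rw [← Matrix.exp_add_of_commute _ _ ((Commute.refl L).neg_left), neg_add_cancel,
          NormedSpace.exp_zero]
      calc NormedSpace.exp (-L) * (Ms z * Mu z)
          = Ms z * (NormedSpace.exp (-L) * Mu z) := by
            rw [← Matrix.mul_assoc, ← hcommE.eq, Matrix.mul_assoc]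
        _ = Ms z := by rw [hinvMu, mul_one]
    exact ⟨key, by rw [key]; exact hs z⟩
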